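/- Fix k ∈ (1,3). For a fixed speed c and delays 0 ≤ h₁ < h₂ (with c ≥ c_#(h₁) so that the roots exist), one has λ₁(c,h₁)/μ₁(c,h₁) < λ₁(c,h₂)/μ₁(c,h₂); i.e. λ₁/μ₁ is strictly increasing in the delay h as well as in the velocity c. Consequently, the function c_* : [0,h_p] → (0,∞) implicitly defined by λ₁(c_*(h),h)/μ₁(c_*(h),h) = (3−k)/4 (on the maximal interval [0,h_p] where this equation has a solution c_*(h) ≥ c_#(h)) is continuous and strictly decreasing. -/

import Mathlib

set_option maxHeartbeats 1000000


open Filter Set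

noncomputable section

/-- The characteristic function `χ(z,c) = z² - cz - 1 + k e^{-zch}` at the zero
equilibrium of the toy model. -/
def chi (k c h z : ℝ) : ℝ := z ^ 2 - c * z - 1 + k * Real.exp (-(z * c * h))

/-- The characteristic function `χ_κ(z) = z² - cz - 1 - e^{-zch}` at the positive
equilibrium `κ = 2` of the toy model. -/
def chiK (c h z : ℝ) : ℝ := z ^ 2 - c * z - 1 - Real.exp (-(z * c * h))

/-- `c` is a positive speed at which `χ(·,c)` has a double positive root. -/
def IsCsharp (k h c : ℝ) : Prop :=
  0 < c ∧ ∃ z : ℝ, 0 < z ∧ chi k c h z = 0 ∧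
    2 * z - c - k * c * h * Real.exp (-(z * c * h)) = 0


lemma exp_diff_ge {a b : ℝ} (hab : a ≤ b) :
    (b - a) * Real.exp (-b) ≤ Real.exp (-a) - Real.exp (-b) := by
  have h := Real.add_one_le_exp (b - a)
  have e : Real.exp (-a) = Real.exp (-b) * Real.exp (b - a) := by
    rw [← Real.exp_add]; ring_nf
  nlinarith [Real.exp_pos (-b)]

lemma exp_diff_le {a b : ℝ} (hab : a ≤ b) :
    Real.exp (-a) - Real.exp (-b) ≤ (b - a) * Real.exp (-a) := by
  have h := Real.add_one_le_exp (a - b)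
  have e : Real.exp (-b) = Real.exp (-a) * Real.exp (a - b) := by
    rw [← Real.exp_add]; ring_nf
  nlinarith [Real.exp_pos (-a)]

lemma exp_diff_abs_le {a b : ℝ} (ha : 0 ≤ a) (hb : 0 ≤ b) :
    |Real.exp (-a) - Real.exp (-b)| ≤ |a - b| := by
  rcases le_total a b with hab | hab
  · have h1 := exp_diff_ge hab
    have h2 := exp_diff_le hab
    have h3 : Real.exp (-a) ≤ 1 := Real.exp_le_one_iff.mpr (by linarith)
    rw [abs_of_nonneg (by nlinarith [Real.exp_pos (-b)]), abs_of_nonpos (by linarith)]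
    nlinarith [Real.exp_pos (-a)]
  · have h1 := exp_diff_ge hab
    have h2 := exp_diff_le hab
    have h3 : Real.exp (-b) ≤ 1 := Real.exp_le_one_iff.mpr (by linarith)
    rw [abs_of_nonpos (by nlinarith [Real.exp_pos (-a)]), abs_of_nonneg (by linarith)]
    nlinarith [Real.exp_pos (-b)]

lemma chi_cont (k : ℝ) : Continuous (fun p : ℝ × ℝ × ℝ => chi k p.1 p.2.1 p.2.2) := by
  unfold chi
  exact (((continuous_snd.comp continuous_snd).pow 2).sub
      (continuous_fst.mul (continuous_snd.comp continuous_snd)) |>.sub continuous_const).add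
    (continuous_const.mul (Real.continuous_exp.comp
      (((continuous_snd.comp continuous_snd).mul continuous_fst |>.mul
        (continuous_fst.comp continuous_snd)).neg)))

lemma chi_cont_z (k c h : ℝ) : Continuous (fun z => chi k c h z) := by
  unfold chi; continuity

lemma chiK_cont (c h : ℝ) : Continuous (fun z => chiK c h z) := by
  unfold chiK; continuity

lemma chi_pos_far {k c h z : ℝ} (hk : 0 < k) (hc : 0 < c) (hh : 0 ≤ h)
    (hz : c + 2 ≤ z) : 0 < chi k c h z := by
  have he := Real.exp_pos (-(z * c * h))
  unfold chi; nlinarith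

lemma chiK_pos_far {c h z : ℝ} (hc : 0 < c) (hh : 0 ≤ h)
    (hz : c + 2 ≤ z) : 0 < chiK c h z := by
  have hz0 : 0 < z := by linarith
  have he : Real.exp (-(z * c * h)) ≤ 1 := by
    rw [Real.exp_le_one_iff]
    have : 0 ≤ z * c * h := by positivity
    linarith
  unfold chiK; nlinarith

section roots
variable {k c h lam mu : ℝ}

lemma exists_chi_root_gt (hk : 0 < k) (hc : 0 < c) (hh : 0 ≤ h) {x : ℝ}
    (hneg : chi k c h x < 0) : ∃ y, x < y ∧ chi k c h y = 0 := by
  have hx : x < c + 2 := by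
    by_contra hx
    exact absurd (chi_pos_far hk hc hh (le_of_not_gt hx)) (by linarith)
  have h0 : (0 : ℝ) ∈ Icc (chi k c h x) (chi k c h (c + 2)) :=
    ⟨hneg.le, (chi_pos_far hk hc hh le_rfl).le⟩
  obtain ⟨y, hy, hyeq⟩ := intermediate_value_Icc hx.le (chi_cont_z k c h).continuousOn h0
  refine ⟨y, ?_, hyeq⟩
  rcases eq_or_lt_of_le hy.1 with rfl | hlt
  · exact absurd hyeq (by linarith)
  · exact hlt

lemma lam_gt_of_chi_neg (hk : 0 < k) (hc : 0 < c) (hh : 0 ≤ h) {x : ℝ}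
    (hmax : ∀ z, chi k c h z = 0 → z ≤ lam) (hneg : chi k c h x < 0) : x < lam := by
  obtain ⟨y, hxy, hy⟩ := exists_chi_root_gt hk hc hh hneg
  exact lt_of_lt_of_le hxy (hmax y hy)

lemma chi_pos_of_gt_lam (hk : 0 < k) (hc : 0 < c) (hh : 0 ≤ h)
    (hmax : ∀ z, chi k c h z = 0 → z ≤ lam) {z : ℝ} (hz : lam < z) :
    0 < chi k c h z := by
  rcases lt_trichotomy (chi k c h z) 0 with hlt | heq | hgt
  · exact absurd (lam_gt_of_chi_neg hk hc hh hmax hlt) (by linarith)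
  · exact absurd (hmax z heq) (by linarith)
  · exact hgt

lemma chiK_zero_eval (hc : 0 < c) (hh : 0 ≤ h) : chiK c h 0 = -2 := by
  simp [chiK]; norm_num

lemma exists_chiK_root_gt (hc : 0 < c) (hh : 0 ≤ h) {x : ℝ}
    (hneg : chiK c h x < 0) : ∃ y, x < y ∧ chiK c h y = 0 := by
  have hx : x < c + 2 := by
    by_contra hx
    exact absurd (chiK_pos_far hc hh (le_of_not_gt hx)) (by linarith)
  have h0 : (0 : ℝ) ∈ Icc (chiK c h x) (chiK c h (c + 2)) :=
    ⟨hneg.le, (chiK_pos_far hc hh le_rfl).le⟩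
  obtain ⟨y, hy, hyeq⟩ := intermediate_value_Icc hx.le (chiK_cont c h).continuousOn h0
  refine ⟨y, ?_, hyeq⟩
  rcases eq_or_lt_of_le hy.1 with rfl | hlt
  · exact absurd hyeq (by linarith)
  · exact hlt

variable (hmu_pos : 0 < mu) (hmu_root : chiK c h mu = 0)
  (hmu_uniq : ∀ z, 0 < z → chiK c h z = 0 → z = mu)

include hmu_pos hmu_root hmu_uniq in
lemma chiK_pos_of_gt_mu (hc : 0 < c) (hh : 0 ≤ h) {z : ℝ} (hz : mu < z) :
    0 < chiK c h z := by
  rcases lt_trichotomy (chiK c h z) 0 with hlt | heq | hgt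
  · obtain ⟨y, hzy, hy⟩ := exists_chiK_root_gt hc hh hlt
    have := hmu_uniq y (by linarith) hy
    linarith
  · have := hmu_uniq z (by linarith) heq
    linarith
  · exact hgt

include hmu_pos hmu_root hmu_uniq in
lemma chiK_neg_of_lt_mu (hc : 0 < c) (hh : 0 ≤ h) {z : ℝ} (hz0 : 0 ≤ z)
    (hz : z < mu) : chiK c h z < 0 := by
  rcases lt_trichotomy (chiK c h z) 0 with hlt | heq | hgt
  · exact hlt
  · rcases eq_or_lt_of_le hz0 with rfl | hz0'
    · rw [chiK_zero_eval hc hh] at heq; norm_num at heq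
    · exact absurd (hmu_uniq z hz0' heq) (by linarith)
  · -- root between 0 and z
    have hneg0 : chiK c h 0 < 0 := by rw [chiK_zero_eval hc hh]; norm_num
    have hz0' : 0 < z := by
      rcases eq_or_lt_of_le hz0 with rfl | hz0'
      · exact absurd hgt (by rw [chiK_zero_eval hc hh]; norm_num)
      · exact hz0'
    have h0 : (0 : ℝ) ∈ Icc (chiK c h 0) (chiK c h z) := ⟨hneg0.le, hgt.le⟩
    obtain ⟨y, hy, hyeq0⟩ := intermediate_value_Icc hz0 (chiK_cont c h).continuousOn h0
    have hyeq : chiK c h y = 0 := hyeq0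
    have hy0 : 0 < y := by
      rcases eq_or_lt_of_le hy.1 with rfl | h'
      · rw [chiK_zero_eval hc hh] at hyeq; norm_num at hyeq
      · exact h'
    have hyz : y < z := by
      rcases eq_or_lt_of_le hy.2 with rfl | h'
      · exact absurd hyeq (by linarith)
      · exact h'
    have := hmu_uniq y hy0 hyeq
    linarith

end roots

section bounds
variable {k c h lam mu : ℝ}

lemma chi_root_lt {z : ℝ} (hk : 0 < k) (hc : 0 < c) (hz : 0 < z)
    (hroot : chi k c h z = 0) : z < c + 1 := by
  unfold chi at hroot
  nlinarith [Real.exp_pos (-(z * c * h)), mul_pos hk (Real.exp_pos (-(z * c * h)))]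

lemma mu_gt_c (hc : 0 < c) (hmu_pos : 0 < mu) (hroot : chiK c h mu = 0) : c < mu := by
  unfold chiK at hroot
  nlinarith [Real.exp_pos (-(mu * c * h))]

lemma mu_gt_one (hc : 0 < c) (hmu_pos : 0 < mu) (hroot : chiK c h mu = 0) : 1 < mu := by
  unfold chiK at hroot
  nlinarith [Real.exp_pos (-(mu * c * h)), mu_gt_c hc hmu_pos (by unfold chiK; linarith)]

lemma mu_lt (hc : 0 < c) (hh : 0 ≤ h) (hroot : chiK c h mu = 0) : mu < c + 2 := by
  by_contra hx
  exact absurd hroot (ne_of_gt (chiK_pos_far hc hh (le_of_not_gt hx)))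

lemma lam_ge_half (hk : 0 < k) (hc : 0 < c) (hh : 0 ≤ h) (hlam_pos : 0 < lam)
    (hroot : chi k c h lam = 0) (hmax : ∀ z, chi k c h z = 0 → z ≤ lam) :
    c ≤ 2 * lam := by
  by_contra hx
  push_neg at hx
  set z' := c - lam with hz'
  have hlz : lam < z' := by simp [hz']; linarith
  have hexp : Real.exp (-(z' * c * h)) ≤ Real.exp (-(lam * c * h)) := by
    apply Real.exp_le_exp.mpr
    have : lam * c * h ≤ z' * c * h := by
      apply mul_le_mul_of_nonneg_right _ hh
      exact mul_le_mul_of_nonneg_right hlz.le hc.le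
    linarith
  have hchiz' : chi k c h z' ≤ 0 := by
    unfold chi at hroot ⊢
    nlinarith [mul_le_mul_of_nonneg_left hexp hk.le]
  rcases eq_or_lt_of_le hchiz' with heq | hlt
  · exact absurd (hmax z' heq) (by linarith)
  · exact absurd (lam_gt_of_chi_neg hk hc hh hmax hlt) (by linarith)

lemma lam_lt_mu (hk : 0 < k) (hc : 0 < c) (hh : 0 ≤ h) (hlam_pos : 0 < lam)
    (hroot : chi k c h lam = 0)
    (hmu_pos : 0 < mu) (hmu_root : chiK c h mu = 0)
    (hmu_uniq : ∀ z, 0 < z → chiK c h z = 0 → z = mu) : lam < mu := by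
  have hneg : chiK c h lam < 0 := by
    unfold chi at hroot; unfold chiK
    nlinarith [Real.exp_pos (-(lam * c * h)), mul_pos hk (Real.exp_pos (-(lam * c * h)))]
  rcases lt_trichotomy lam mu with hlt | heq | hgt
  · exact hlt
  · exact absurd hmu_root (by rw [← heq]; linarith)
  · exact absurd (chiK_pos_of_gt_mu hmu_pos hmu_root hmu_uniq hc hh hgt) (by linarith)

lemma chi_anti_c {c₁ c₂ z : ℝ} (hk : 0 < k) (hc₁ : 0 < c₁) (hcc : c₁ < c₂)
    (hh : 0 ≤ h) (hz : 0 < z) : chi k c₂ h z < chi k c₁ h z := by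
  unfold chi
  have hexp : Real.exp (-(z * c₂ * h)) ≤ Real.exp (-(z * c₁ * h)) := by
    apply Real.exp_le_exp.mpr
    have : z * c₁ * h ≤ z * c₂ * h := by
      apply mul_le_mul_of_nonneg_right _ hh
      exact mul_le_mul_of_nonneg_left hcc.le hz.le
    linarith
  nlinarith [mul_le_mul_of_nonneg_left hexp hk.le]

lemma chi_anti_h {h₁ h₂ z : ℝ} (hk : 0 < k) (hc : 0 < c) (hh₁ : 0 ≤ h₁)
    (hhh : h₁ < h₂) (hz : 0 < z) : chi k c h₂ z < chi k c h₁ z := by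
  unfold chi
  have hexp : Real.exp (-(z * c * h₂)) < Real.exp (-(z * c * h₁)) := by
    apply Real.exp_lt_exp.mpr
    have : z * c * h₁ < z * c * h₂ := by
      apply mul_lt_mul_of_pos_left hhh (mul_pos hz hc)
    linarith
  nlinarith [mul_lt_mul_of_pos_left hexp hk]

lemma chiK_mono_h {h₁ h₂ z : ℝ} (hc : 0 < c) (hh₁ : 0 ≤ h₁)
    (hhh : h₁ < h₂) (hz : 0 < z) : chiK c h₁ z < chiK c h₂ z := by
  unfold chiK
  have hexp : Real.exp (-(z * c * h₂)) < Real.exp (-(z * c * h₁)) := by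
    apply Real.exp_lt_exp.mpr
    have : z * c * h₁ < z * c * h₂ :=
      mul_lt_mul_of_pos_left hhh (mul_pos hz hc)
    linarith
  linarith

end bounds

section convexity
variable {k c h lam : ℝ}

lemma chi_convex_three {a b d : ℝ} (hk : 0 < k) (hab : a < b) (hbd : b < d) :
    (d - a) * chi k c h b ≤ (d - b) * chi k c h a + (b - a) * chi k c h d := by
  have hda : 0 < d - a := by linarith
  set t : ℝ := (d - b) / (d - a) with ht
  set s : ℝ := (b - a) / (d - a) with hs
  have ht0 : 0 ≤ t := div_nonneg (by linarith) hda.le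
  have hs0 : 0 ≤ s := div_nonneg (by linarith) hda.le
  have hts : t + s = 1 := by
    have hdd : d - b + (b - a) = d - a := by ring
    rw [ht, hs, ← add_div, hdd, div_self hda.ne']
  have harg : t • (-(a * c * h)) + s • (-(d * c * h)) = -(b * c * h) := by
    simp only [smul_eq_mul, ht, hs]
    field_simp
    ring
  have hexp := convexOn_exp.2 (Set.mem_univ (-(a * c * h)))
    (Set.mem_univ (-(d * c * h))) ht0 hs0 hts
  rw [harg] at hexp
  simp only [smul_eq_mul] at hexp
  have hexp' : (d - a) * Real.exp (-(b * c * h)) ≤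
      (d - b) * Real.exp (-(a * c * h)) + (b - a) * Real.exp (-(d * c * h)) := by
    have := mul_le_mul_of_nonneg_left hexp hda.le
    calc (d - a) * Real.exp (-(b * c * h)) ≤
        (d - a) * (t * Real.exp (-(a * c * h)) + s * Real.exp (-(d * c * h))) := this
      _ = (d - b) * Real.exp (-(a * c * h)) + (b - a) * Real.exp (-(d * c * h)) := by
          rw [ht, hs]; field_simp
  unfold chi
  nlinarith [mul_le_mul_of_nonneg_left hexp' hk.le, mul_pos (mul_pos hda (sub_pos.mpr hab)) (sub_pos.mpr hbd)]

lemma chi_gt_of_secant_pos {a b z : ℝ} (hk : 0 < k) (hab : a < b) (hbz : b < z)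
    (hv : chi k c h a < chi k c h b) : chi k c h b < chi k c h z := by
  have h3 := chi_convex_three (c := c) (h := h) hk hab hbz
  nlinarith [sub_pos.mpr hab, sub_pos.mpr hbz]

lemma chi_hasDerivAt (k c h z : ℝ) :
    HasDerivAt (fun z => chi k c h z)
      (2 * z - c - k * c * h * Real.exp (-(z * c * h))) z := by
  have h1 : HasDerivAt (fun z : ℝ => z ^ 2) (2 * z) z := by
    simpa using (hasDerivAt_pow 2 z)
  have h2 : HasDerivAt (fun z : ℝ => c * z) c z := by
    simpa using (hasDerivAt_id z).const_mul c
  have h3 : HasDerivAt (fun z : ℝ => -(z * c * h)) (-(c * h)) z := by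
    exact ((((hasDerivAt_id' z).mul_const c).mul_const h).neg).congr_deriv (by ring)
  have h4 := (h3.exp).const_mul k
  have h5 := ((h1.sub h2).sub_const 1).add h4
  convert h5 using 1
  · rfl
  · rfl
  · rfl
  · ring

lemma slope_nonneg (hk : 0 < k) (hc : 0 < c) (hh : 0 ≤ h) (hlam_pos : 0 < lam)
    (hroot : chi k c h lam = 0) (hmax : ∀ z, chi k c h z = 0 → z ≤ lam) :
    0 ≤ 2 * lam - c - k * c * h * Real.exp (-(lam * c * h)) := by
  set g : ℝ → ℝ := fun t => t + lam - c - k * c * h * Real.exp (-(t * c * h)) with hg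
  have hgpos : ∀ t ∈ Ioi lam, 0 ≤ g t := by
    intro t ht
    have htl : lam < t := ht
    have hchit : 0 < chi k c h t := chi_pos_of_gt_lam hk hc hh hmax htl
    have hexp := exp_diff_ge (a := lam * c * h) (b := t * c * h)
      (by nlinarith [mul_le_mul_of_nonneg_right (mul_le_mul_of_nonneg_right htl.le hc.le) hh])
    have hkexp := mul_le_mul_of_nonneg_left hexp hk.le
    have key : 0 < (t - lam) * g t := by
      unfold chi at hchit hroot
      simp only [hg]
      nlinarith
    have htl' : 0 < t - lam := sub_pos.mpr htl
    rcases mul_pos_iff.mp key with ⟨_, hpos⟩ | ⟨hneg, _⟩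
    · exact hpos.le
    · linarith
  have hcont : ContinuousAt g lam := by
    apply Continuous.continuousAt
    simp only [hg]
    continuity
  have htend : Tendsto g (nhdsWithin lam (Ioi lam)) (nhds (g lam)) :=
    (hcont.continuousWithinAt)
  have hev : ∀ᶠ t in nhdsWithin lam (Ioi lam), 0 ≤ g t :=
    eventually_nhdsWithin_of_forall hgpos
  have := ge_of_tendsto htend hev
  simp only [hg] at this
  linarith

lemma csharp_of_flat {csharp : ℝ → ℝ} {eps : ℝ}
    (huniq : ∀ c' : ℝ, IsCsharp k h c' → c' = csharp h)
    (hk : 0 < k) (hc : 0 < c) (hh : 0 ≤ h) (hlam_pos : 0 < lam)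
    (hroot : chi k c h lam = 0) (hmax : ∀ z, chi k c h z = 0 → z ≤ lam)
    (heps : 0 < eps)
    (hflat : ∀ z ∈ Ioo (lam - eps) lam, 0 ≤ chi k c h z) :
    c = csharp h := by
  have hmin : IsLocalMin (fun z => chi k c h z) lam := by
    have hnb : Ioo (lam - eps) (lam + 1) ∈ nhds lam :=
      isOpen_Ioo.mem_nhds ⟨by linarith, by linarith⟩
    refine Filter.eventually_of_mem hnb ?_
    intro z hz
    rcases lt_trichotomy z lam with hlt | heq | hgt
    · simpa [hroot] using hflat z ⟨hz.1, hlt⟩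
    · simp [heq]
    · simpa [hroot] using (chi_pos_of_gt_lam hk hc hh hmax hgt).le
  have hderiv := hmin.hasDerivAt_eq_zero (chi_hasDerivAt k c h lam)
  exact huniq c ⟨hc, lam, hlam_pos, hroot, by linarith⟩

end convexity

/-- The comparison function for the local monotonicity argument. -/
def Fcmp (k h l₁ m₁ c₁ l₂ m₂ c₂ : ℝ) : ℝ :=
  m₁ * l₂ * (1 + k * h * Real.exp (-(l₂ * c₂ * h))) *
      (m₁ + m₂ - c₁ + h * c₁ * Real.exp (-(m₂ * c₂ * h))) -
    l₁ * m₂ * (1 - h * Real.exp (-(m₂ * c₂ * h))) *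
      (l₁ + l₂ - c₁ - k * h * c₁ * Real.exp (-(l₂ * c₂ * h)))

lemma key_two_point {k h c₁ c₂ l₁ l₂ m₁ m₂ : ℝ}
    (hk : 0 < k) (hh : 0 ≤ h) (hc₁ : 0 < c₁) (hcc : c₁ < c₂)
    (he₁ : chi k c₁ h l₁ = 0) (he₂ : chi k c₂ h l₂ = 0)
    (hf₁ : chiK c₁ h m₁ = 0) (hf₂ : chiK c₂ h m₂ = 0)
    (hl₁ : 0 < l₁) (hll : l₁ < l₂) (hm₁ : 0 < m₁) (hm₂ : 0 < m₂)
    (hF : 0 < Fcmp k h l₁ m₁ c₁ l₂ m₂ c₂) :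
    l₁ * m₂ < l₂ * m₁ := by
  have hm₁c : c₁ < m₁ := mu_gt_c hc₁ hm₁ hf₁
  rcases le_or_gt m₂ m₁ with hmm | hmm
  · nlinarith
  -- hard case : m₁ < m₂
  set E₂ := Real.exp (-(l₂ * c₂ * h)) with hE₂
  set F₂ := Real.exp (-(m₂ * c₂ * h)) with hF₂
  have hE₂pos : 0 < E₂ := Real.exp_pos _
  have hF₂pos : 0 < F₂ := Real.exp_pos _
  set Wp := l₁ + l₂ - c₁ - k * h * c₁ * E₂ with hWp
  set Vp := m₁ + m₂ - c₁ + h * c₁ * F₂ with hVp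
  have hVpos : 0 < Vp := by
    have : 0 ≤ h * c₁ * F₂ := by positivity
    simp only [hVp]; nlinarith
  -- inequality (A)
  have hexpA : (l₂ * c₂ * h - l₁ * c₁ * h) * Real.exp (-(l₂ * c₂ * h)) ≤
      Real.exp (-(l₁ * c₁ * h)) - Real.exp (-(l₂ * c₂ * h)) := by
    refine exp_diff_ge ?_
    have h1 : l₁ * c₁ ≤ l₂ * c₂ := by nlinarith
    exact mul_le_mul_of_nonneg_right h1 hh
  have hA : l₂ * (c₂ - c₁) * (1 + k * h * E₂) ≤ (l₂ - l₁) * Wp := by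
    have hsub : k * (Real.exp (-(l₁ * c₁ * h)) - Real.exp (-(l₂ * c₂ * h))) =
        (l₂ - l₁) * (l₁ + l₂ - c₁) - l₂ * (c₂ - c₁) := by
      unfold chi at he₁ he₂; linear_combination he₁ - he₂
    have hkexp := mul_le_mul_of_nonneg_left hexpA hk.le
    simp only [hWp, ← hE₂]
    nlinarith [hkexp, hsub]
  -- inequality (B)
  have hexpB : (m₂ * c₂ * h - m₁ * c₁ * h) * Real.exp (-(m₂ * c₂ * h)) ≤
      Real.exp (-(m₁ * c₁ * h)) - Real.exp (-(m₂ * c₂ * h)) := by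
    refine exp_diff_ge ?_
    have h1 : m₁ * c₁ ≤ m₂ * c₂ := by nlinarith
    exact mul_le_mul_of_nonneg_right h1 hh
  have hB : (m₂ - m₁) * Vp ≤ m₂ * (c₂ - c₁) * (1 - h * F₂) := by
    have hsub : (Real.exp (-(m₂ * c₂ * h)) - Real.exp (-(m₁ * c₁ * h))) =
        (m₂ - m₁) * (m₁ + m₂ - c₁) - m₂ * (c₂ - c₁) := by
      unfold chiK at hf₁ hf₂; linear_combination hf₁ - hf₂
    simp only [hVp, ← hF₂]
    nlinarith [hexpB, hsub]
  have hWpos : 0 < Wp := by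
    have hlhs : 0 < l₂ * (c₂ - c₁) * (1 + k * h * E₂) := by
      have h1 : 0 < l₂ := by linarith
      have h2 : (0:ℝ) < 1 + k * h * E₂ := by positivity
      exact mul_pos (mul_pos h1 (sub_pos.mpr hcc)) h2
    nlinarith [hA, sub_pos.mpr hll]
  -- combine
  have hFc : 0 < m₁ * l₂ * (1 + k * h * E₂) * Vp - l₁ * m₂ * (1 - h * F₂) * Wp := by
    have := hF; unfold Fcmp at this
    simp only [← hE₂, ← hF₂, ← hWp, ← hVp] at this
    exact this
  have hstep1 : (l₂ - l₁) * m₁ * Wp * Vp ≥ l₂ * (c₂ - c₁) * (1 + k * h * E₂) * m₁ * Vp := by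
    have h1 := mul_le_mul_of_nonneg_right hA (le_of_lt (mul_pos hm₁ hVpos))
    ring_nf at h1 ⊢
    linarith
  have hstep2 : l₂ * (c₂ - c₁) * (1 + k * h * E₂) * m₁ * Vp >
      m₂ * (c₂ - c₁) * (1 - h * F₂) * l₁ * Wp := by
    have hd : 0 < c₂ - c₁ := sub_pos.mpr hcc
    have h1 := mul_lt_mul_of_pos_left hFc hd
    ring_nf at h1 ⊢
    linarith
  have hstep3 : m₂ * (c₂ - c₁) * (1 - h * F₂) * l₁ * Wp ≥ (m₂ - m₁) * Vp * l₁ * Wp := by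
    have h1 := mul_le_mul_of_nonneg_right hB (le_of_lt (mul_pos hl₁ hWpos))
    ring_nf at h1 ⊢
    linarith
  have hfinal : (l₂ - l₁) * m₁ * Wp * Vp > (m₂ - m₁) * l₁ * Wp * Vp := by
    ring_nf at hstep1 hstep2 hstep3 ⊢
    linarith
  have hWV : 0 < Wp * Vp := mul_pos hWpos hVpos
  have hshape : (m₂ - m₁) * l₁ * (Wp * Vp) < (l₂ - l₁) * m₁ * (Wp * Vp) := by
    ring_nf at hfinal ⊢
    linarith
  have hcan := (mul_lt_mul_iff_left₀ hWV).mp hshape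
  nlinarith [hcan]

lemma Fdiag_pos {k h c l m : ℝ} (hk : 0 < k) (hh : 0 ≤ h) (hc : 0 < c)
    (hl : 0 < l) (hlm : l < m) (hmc : c < m)
    (hS : 0 ≤ 2 * l - c - k * c * h * Real.exp (-(l * c * h))) :
    0 < Fcmp k h l m c l m c := by
  set E := Real.exp (-(l * c * h)) with hE
  set F := Real.exp (-(m * c * h)) with hF
  have hEpos : 0 < E := Real.exp_pos _
  have hFpos : 0 < F := Real.exp_pos _
  have hm : 0 < m := lt_trans hl hlm
  have hB : 0 < 2 * m - c + h * c * F := by nlinarith [mul_nonneg (mul_nonneg hh hc.le) hFpos.le]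
  have hinner : (1 - h * F) * (l + l - c - k * h * c * E) <
      (1 + k * h * E) * (m + m - c + h * c * F) := by
    have hA' : 0 ≤ l + l - c - k * h * c * E := by nlinarith [hS]
    have hAB : l + l - c - k * h * c * E < m + m - c + h * c * F := by
      nlinarith [mul_nonneg (mul_nonneg hh hc.le) hFpos.le,
        mul_nonneg (mul_nonneg hk.le (mul_nonneg hh hc.le)) hEpos.le]
    rcases le_or_gt (1 - h * F) 0 with h1 | h1
    · have hle : (1 - h * F) * (l + l - c - k * h * c * E) ≤ 0 :=
        mul_nonpos_of_nonpos_of_nonneg h1 hA'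
      have h4 : 0 < (1 + k * h * E) * (m + m - c + h * c * F) :=
        mul_pos (by positivity) (by linarith [hB])
      linarith
    · have h2 : (1 - h * F) * (l + l - c - k * h * c * E) ≤ l + l - c - k * h * c * E := by
        nlinarith [mul_nonneg (mul_nonneg hh hFpos.le) hA']
      have h3 : (1:ℝ) ≤ 1 + k * h * E := by nlinarith [mul_nonneg (mul_nonneg hk.le hh) hEpos.le]
      have h4 := mul_le_mul_of_nonneg_right h3 (by linarith [hB] : (0:ℝ) ≤ m + m - c + h * c * F)
      rw [one_mul] at h4
      linarith
  have h5 := mul_lt_mul_of_pos_left hinner (mul_pos hm hl)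
  unfold Fcmp
  simp only [← hE, ← hF]
  ring_nf at h5 ⊢
  linarith

lemma pos_box {f : ℝ → ℝ → ℝ → ℝ}
    (hf : Continuous fun p : ℝ × ℝ × ℝ => f p.1 p.2.1 p.2.2) {x y z : ℝ}
    (h0 : 0 < f x y z) :
    ∃ ε > 0, ∀ a b d : ℝ, |a - x| < ε → |b - y| < ε → |d - z| < ε → 0 < f a b d := by
  have hT : ContinuousAt (fun p : ℝ × ℝ × ℝ => f p.1 p.2.1 p.2.2) (x, y, z) :=
    hf.continuousAt
  have hev : ∀ᶠ p : ℝ × ℝ × ℝ in nhds (x, y, z), 0 < f p.1 p.2.1 p.2.2 :=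
    hT.eventually (lt_mem_nhds h0)
  rw [Metric.eventually_nhds_iff] at hev
  obtain ⟨ε, hε, hball⟩ := hev
  refine ⟨ε, hε, fun a b d ha hb hd => ?_⟩
  have : dist ((a, b, d) : ℝ × ℝ × ℝ) (x, y, z) < ε := by
    rw [Prod.dist_eq, Prod.dist_eq]
    simp only [Real.dist_eq]
    exact max_lt ha (max_lt hb hd)
  exact hball this

lemma Fcmp_cont1 (k h l₁ m₁ c₁ : ℝ) :
    Continuous (fun p : ℝ × ℝ × ℝ => Fcmp k h l₁ m₁ c₁ p.1 p.2.1 p.2.2) := by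
  unfold Fcmp
  fun_prop

lemma Fcmp_cont2 (k h l₂ m₂ c₂ : ℝ) :
    Continuous (fun p : ℝ × ℝ × ℝ => Fcmp k h p.1 p.2.1 p.2.2 l₂ m₂ c₂) := by
  unfold Fcmp
  fun_prop

lemma exp_param_diff_le {c h c₀ h₀ z δ : ℝ} (hz : 0 ≤ z) (hc : 0 ≤ c) (hh : 0 ≤ h)
    (hc₀ : 0 ≤ c₀) (hh₀ : 0 ≤ h₀) (hδ1 : δ ≤ 1)
    (hcd : |c - c₀| ≤ δ) (hhd : |h - h₀| ≤ δ) :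
    |Real.exp (-(z * c * h)) - Real.exp (-(z * c₀ * h₀))| ≤ δ * (z * (h₀ + 1 + c₀)) := by
  have hδ0 : 0 ≤ δ := le_trans (abs_nonneg _) hcd
  have h1 := exp_diff_abs_le (a := z * c * h) (b := z * c₀ * h₀)
    (by positivity) (by positivity)
  have h2 : |z * c * h - z * c₀ * h₀| ≤ z * (|c - c₀| * h + c₀ * |h - h₀|) := by
    have : z * c * h - z * c₀ * h₀ = z * ((c - c₀) * h + c₀ * (h - h₀)) := by ring
    rw [this, abs_mul, abs_of_nonneg hz]
    have := abs_add_le ((c - c₀) * h) (c₀ * (h - h₀))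
    rw [abs_mul, abs_mul, abs_of_nonneg hh, abs_of_nonneg hc₀] at this
    exact mul_le_mul_of_nonneg_left this hz
  have hh' : h ≤ h₀ + 1 := by
    have := abs_le.mp hhd
    linarith
  have h3 : z * (|c - c₀| * h + c₀ * |h - h₀|) ≤ δ * (z * (h₀ + 1 + c₀)) := by
    have e1 : |c - c₀| * h ≤ δ * (h₀ + 1) := by
      apply mul_le_mul hcd hh' hh
      linarith
    have e2 : c₀ * |h - h₀| ≤ c₀ * δ := mul_le_mul_of_nonneg_left hhd hc₀
    nlinarith [hz]
  linarith

lemma chi_param_diff_le {k c h c₀ h₀ z δ : ℝ} (hk : 0 ≤ k) (hz : 0 ≤ z)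
    (hc : 0 ≤ c) (hh : 0 ≤ h) (hc₀ : 0 ≤ c₀) (hh₀ : 0 ≤ h₀) (hδ1 : δ ≤ 1)
    (hcd : |c - c₀| ≤ δ) (hhd : |h - h₀| ≤ δ) :
    |chi k c h z - chi k c₀ h₀ z| ≤ δ * (z * (1 + k * (h₀ + 1 + c₀))) := by
  have hδ0 : 0 ≤ δ := le_trans (abs_nonneg _) hcd
  have key : chi k c h z - chi k c₀ h₀ z =
      -((c - c₀) * z) + k * (Real.exp (-(z * c * h)) - Real.exp (-(z * c₀ * h₀))) := by
    unfold chi; ring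
  rw [key]
  have h1 := abs_add_le (-((c - c₀) * z))
    (k * (Real.exp (-(z * c * h)) - Real.exp (-(z * c₀ * h₀))))
  rw [abs_neg, abs_mul, abs_mul, abs_of_nonneg hk, abs_of_nonneg hz] at h1
  have h2 := exp_param_diff_le hz hc hh hc₀ hh₀ hδ1 hcd hhd
  have h3 : |c - c₀| * z ≤ δ * z := mul_le_mul_of_nonneg_right hcd hz
  have h4 : k * |Real.exp (-(z * c * h)) - Real.exp (-(z * c₀ * h₀))| ≤
      k * (δ * (z * (h₀ + 1 + c₀))) := mul_le_mul_of_nonneg_left h2 hk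
  calc |(-((c - c₀) * z)) + k * (Real.exp (-(z * c * h)) - Real.exp (-(z * c₀ * h₀)))| ≤
      |c - c₀| * z + k * |Real.exp (-(z * c * h)) - Real.exp (-(z * c₀ * h₀))| := h1
    _ ≤ δ * z + k * (δ * (z * (h₀ + 1 + c₀))) := add_le_add h3 h4
    _ = δ * (z * (1 + k * (h₀ + 1 + c₀))) := by ring

lemma chiK_param_diff_le {c h c₀ h₀ z δ : ℝ} (hz : 0 ≤ z)
    (hc : 0 ≤ c) (hh : 0 ≤ h) (hc₀ : 0 ≤ c₀) (hh₀ : 0 ≤ h₀) (hδ1 : δ ≤ 1)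
    (hcd : |c - c₀| ≤ δ) (hhd : |h - h₀| ≤ δ) :
    |chiK c h z - chiK c₀ h₀ z| ≤ δ * (z * (1 + (h₀ + 1 + c₀))) := by
  have hδ0 : 0 ≤ δ := le_trans (abs_nonneg _) hcd
  have key : chiK c h z - chiK c₀ h₀ z =
      -((c - c₀) * z) + -(Real.exp (-(z * c * h)) - Real.exp (-(z * c₀ * h₀))) := by
    unfold chiK; ring
  rw [key]
  have h1 := abs_add_le (-((c - c₀) * z))
    (-(Real.exp (-(z * c * h)) - Real.exp (-(z * c₀ * h₀))))
  rw [abs_neg, abs_neg, abs_mul, abs_of_nonneg hz] at h1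
  have h2 := exp_param_diff_le hz hc hh hc₀ hh₀ hδ1 hcd hhd
  have h3 : |c - c₀| * z ≤ δ * z := mul_le_mul_of_nonneg_right hcd hz
  calc |(-((c - c₀) * z)) + -(Real.exp (-(z * c * h)) - Real.exp (-(z * c₀ * h₀)))| ≤
      |c - c₀| * z + |Real.exp (-(z * c * h)) - Real.exp (-(z * c₀ * h₀))| := h1
    _ ≤ δ * z + δ * (z * (h₀ + 1 + c₀)) := add_le_add h3 h2
    _ = δ * (z * (1 + (h₀ + 1 + c₀))) := by ring

lemma isCsharp_limit {k : ℝ} (hk1 : 1 < k) {cs hs : ℕ → ℝ} {h₀ cbar A B : ℝ}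
    (hh₀ : 0 ≤ h₀) (hcs : ∀ n, IsCsharp k (hs n) (cs n)) (hhs : ∀ n, 0 ≤ hs n)
    (htendc : Tendsto cs atTop (nhds cbar)) (htendh : Tendsto hs atTop (nhds h₀))
    (hA : 0 < A) (hbound : ∀ n, A ≤ cs n ∧ cs n ≤ B) :
    IsCsharp k h₀ cbar := by
  have hk0 : 0 < k := by linarith
  have hz : ∀ n, ∃ z, 0 < z ∧ chi k (cs n) (hs n) z = 0 ∧
      2 * z - cs n - k * cs n * hs n * Real.exp (-(z * cs n * hs n)) = 0 :=
    fun n => (hcs n).2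
  choose z hz1 hz2 hz3 using hz
  have hcpos : ∀ n, 0 < cs n := fun n => (hcs n).1
  have hzmem : ∀ n, z n ∈ Icc (A / 2) (B + 1) := by
    intro n
    constructor
    · have hE : 0 ≤ k * cs n * hs n * Real.exp (-(z n * cs n * hs n)) := by
        have := Real.exp_pos (-(z n * cs n * hs n))
        have := (hcpos n)
        have := hhs n
        positivity
      have := hz3 n
      have hAn := (hbound n).1
      linarith
    · have := chi_root_lt hk0 (hcpos n) (hz1 n) (hz2 n)
      have := (hbound n).2
      linarith
  obtain ⟨zbar, hzbarmem, φ, hφ, hztend⟩ :=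
    (isCompact_Icc (a := A / 2) (b := B + 1)).tendsto_subseq hzmem
  have hcφ : Tendsto (fun n => cs (φ n)) atTop (nhds cbar) :=
    htendc.comp hφ.tendsto_atTop
  have hhφ : Tendsto (fun n => hs (φ n)) atTop (nhds h₀) :=
    htendh.comp hφ.tendsto_atTop
  have hcbarA : A ≤ cbar :=
    ge_of_tendsto htendc (Eventually.of_forall fun n => (hbound n).1)
  have hzbarpos : 0 < zbar := lt_of_lt_of_le (by linarith) hzbarmem.1
  have hprod : Tendsto (fun n => ((cs (φ n), hs (φ n), z (φ n)) : ℝ × ℝ × ℝ))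
      atTop (nhds (cbar, h₀, zbar)) :=
    hcφ.prodMk_nhds (hhφ.prodMk_nhds hztend)
  have hchi0 : chi k cbar h₀ zbar = 0 := by
    have h1 : Tendsto (fun n => chi k (cs (φ n)) (hs (φ n)) (z (φ n))) atTop
        (nhds (chi k cbar h₀ zbar)) := ((chi_cont k).tendsto _).comp hprod
    have h2 : (fun n => chi k (cs (φ n)) (hs (φ n)) (z (φ n))) = fun _ => (0 : ℝ) :=
      funext fun n => hz2 (φ n)
    rw [h2] at h1
    exact (tendsto_nhds_unique tendsto_const_nhds h1).symm
  have hsig : Continuous (fun p : ℝ × ℝ × ℝ =>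
      2 * p.2.2 - p.1 - k * p.1 * p.2.1 * Real.exp (-(p.2.2 * p.1 * p.2.1))) := by
    fun_prop
  have hslope0 : 2 * zbar - cbar - k * cbar * h₀ * Real.exp (-(zbar * cbar * h₀)) = 0 := by
    have h1 : Tendsto (fun n => 2 * z (φ n) - cs (φ n) -
        k * cs (φ n) * hs (φ n) * Real.exp (-(z (φ n) * cs (φ n) * hs (φ n)))) atTop
        (nhds (2 * zbar - cbar - k * cbar * h₀ * Real.exp (-(zbar * cbar * h₀)))) :=
      (hsig.tendsto _).comp hprod
    have h2 : (fun n => 2 * z (φ n) - cs (φ n) -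
        k * cs (φ n) * hs (φ n) * Real.exp (-(z (φ n) * cs (φ n) * hs (φ n)))) =
        fun _ => (0 : ℝ) := funext fun n => hz3 (φ n)
    rw [h2] at h1
    exact (tendsto_nhds_unique tendsto_const_nhds h1).symm
  exact ⟨by linarith, zbar, hzbarpos, hchi0, hslope0⟩


section main
variable {k : ℝ} (hk1 : 1 < k) (hk3 : k < 3) (csharp : ℝ → ℝ)
  (hcsharp : ∀ h : ℝ, 0 ≤ h →
    IsCsharp k h (csharp h) ∧ ∀ c : ℝ, IsCsharp k h c → c = csharp h)
  (hcsharp_anti : ∀ h₁ h₂ : ℝ, 0 ≤ h₁ → h₁ < h₂ → csharp h₂ ≤ csharp h₁)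
  (lam1 mu1 : ℝ → ℝ → ℝ)
  (hlam1 : ∀ c h : ℝ, 0 ≤ h → csharp h ≤ c →
    0 < lam1 c h ∧ chi k c h (lam1 c h) = 0 ∧ ∀ z : ℝ, chi k c h z = 0 → z ≤ lam1 c h)
  (hmu1 : ∀ c h : ℝ, 0 ≤ h → 0 < c →
    0 < mu1 c h ∧ chiK c h (mu1 c h) = 0 ∧
      ∀ z : ℝ, 0 < z → chiK c h z = 0 → z = mu1 c h)
  {hp : ℝ} {cstar : ℝ → ℝ}

include hk1 hcsharp in
lemma csharp_pos {h : ℝ} (hh : 0 ≤ h) : 0 < csharp h := (hcsharp h hh).1.1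

include hk1 hcsharp hlam1 in
lemma lam_upper_cont {c₀ h₀ ε : ℝ} (hh₀ : 0 ≤ h₀) (hc₀ : csharp h₀ ≤ c₀) (hε : 0 < ε) :
    ∃ δ > 0, ∀ c h, 0 ≤ h → csharp h ≤ c → |c - c₀| ≤ δ → |h - h₀| ≤ δ →
      lam1 c h < lam1 c₀ h₀ + ε := by
  obtain ⟨hLpos, hLroot, hLmax⟩ := hlam1 c₀ h₀ hh₀ hc₀
  have hk0 : 0 < k := by linarith
  have hc₀pos : 0 < c₀ := lt_of_lt_of_le (csharp_pos hk1 csharp hcsharp hh₀) hc₀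
  set L := lam1 c₀ h₀ with hL
  have hm : 0 < chi k c₀ h₀ (L + ε) :=
    chi_pos_of_gt_lam hk0 hc₀pos hh₀ hLmax (by linarith)
  set m := chi k c₀ h₀ (L + ε) with hmdef
  set K := (L + ε) * (1 + k * (h₀ + 1 + c₀)) + 1 with hK
  have hKpos : 0 < K := by
    have : 0 < (L + ε) * (1 + k * (h₀ + 1 + c₀)) := by positivity
    linarith
  refine ⟨min 1 (m / (3 * K)), by positivity, fun c h hh hch hcd hhd => ?_⟩
  set δ := min 1 (m / (3 * K)) with hδ
  have hδ1 : δ ≤ 1 := min_le_left _ _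
  have hδm : δ ≤ m / (3 * K) := min_le_right _ _
  have hδK : δ * K ≤ m / 3 := by
    have h1 : δ * K ≤ (m / (3 * K)) * K := mul_le_mul_of_nonneg_right hδm hKpos.le
    have h2 : (m / (3 * K)) * K = m / 3 := by field_simp [hKpos.ne']
    linarith
  have hcpos : 0 < c := lt_of_lt_of_le (csharp_pos hk1 csharp hcsharp hh) hch
  have hb1 : |chi k c h L - chi k c₀ h₀ L| ≤ δ * (L * (1 + k * (h₀ + 1 + c₀))) :=
    chi_param_diff_le hk0.le hLpos.le hcpos.le hh hc₀pos.le hh₀ hδ1 hcd hhd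
  have hb2 : |chi k c h (L + ε) - chi k c₀ h₀ (L + ε)| ≤
      δ * ((L + ε) * (1 + k * (h₀ + 1 + c₀))) :=
    chi_param_diff_le hk0.le (by linarith) hcpos.le hh hc₀pos.le hh₀ hδ1 hcd hhd
  have hδ0 : 0 ≤ δ := le_min zero_le_one (by positivity)
  clear_value L m K δ
  have hchiL : chi k c h L ≤ m / 3 := by
    have h1 := (abs_le.mp hb1).2
    have h2 : δ * (L * (1 + k * (h₀ + 1 + c₀))) ≤ δ * K := by
      apply mul_le_mul_of_nonneg_left _ hδ0
      have hA : (0:ℝ) < 1 + k * (h₀ + 1 + c₀) := by positivity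
      nlinarith [hε]
    linarith [hδK, hLroot]
  have hchiLe : 2 * m / 3 ≤ chi k c h (L + ε) := by
    have h1 := (abs_le.mp hb2).1
    have h2 : δ * ((L + ε) * (1 + k * (h₀ + 1 + c₀))) ≤ δ * K := by
      apply mul_le_mul_of_nonneg_left _ hδ0
      linarith
    linarith [hδK]
  have hlt : chi k c h L < chi k c h (L + ε) := by linarith [hm]
  obtain ⟨hlpos', hlroot', hlmax'⟩ := hlam1 c h hh hch
  by_contra hcon
  push_neg at hcon
  rcases eq_or_lt_of_le hcon with heq | hgt
  · have h0 := hlroot'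
    rw [← heq] at h0
    linarith [hchiLe, hm]
  · have hsec := chi_gt_of_secant_pos hk0 (show L < L + ε by linarith) hgt hlt
    rw [hlroot'] at hsec
    linarith [hchiLe, hm]

include hk1 hcsharp hlam1 in
lemma lam_lower_cont {c₀ h₀ ε : ℝ} (hh₀ : 0 ≤ h₀) (hc₀ : csharp h₀ < c₀) (hε : 0 < ε)
    (hεL : ε ≤ lam1 c₀ h₀) :
    ∃ δ > 0, ∀ c h, 0 ≤ h → csharp h ≤ c → |c - c₀| ≤ δ → |h - h₀| ≤ δ →
      lam1 c₀ h₀ - ε < lam1 c h := by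
  obtain ⟨hLpos, hLroot, hLmax⟩ := hlam1 c₀ h₀ hh₀ hc₀.le
  have hk0 : 0 < k := by linarith
  have hc₀pos : 0 < c₀ := lt_trans (csharp_pos hk1 csharp hcsharp hh₀) hc₀
  set L := lam1 c₀ h₀ with hL
  by_cases hcase : ∀ z ∈ Ioo (L - ε) L, 0 ≤ chi k c₀ h₀ z
  · exfalso
    have := csharp_of_flat (hcsharp h₀ hh₀).2 hk0 hc₀pos hh₀ hLpos hLroot hLmax hε hcase
    linarith [hc₀, this.symm.le]
  · push_neg at hcase
    obtain ⟨z₀, hz₀mem, hz₀neg⟩ := hcase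
    have hz₀pos : 0 ≤ z₀ := by
      have := hz₀mem.1
      linarith [hεL]
    set m := -(chi k c₀ h₀ z₀) with hm
    have hmpos : 0 < m := by simp [hm]; linarith
    set K := z₀ * (1 + k * (h₀ + 1 + c₀)) + 1 with hK
    have hKpos : 0 < K := by
      have : 0 ≤ z₀ * (1 + k * (h₀ + 1 + c₀)) := by positivity
      linarith
    refine ⟨min 1 (m / (2 * K)), by positivity, fun c h hh hch hcd hhd => ?_⟩
    set δ := min 1 (m / (2 * K)) with hδ
    have hδ1 : δ ≤ 1 := min_le_left _ _
    have hδm : δ ≤ m / (2 * K) := min_le_right _ _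
    have hδ0 : 0 ≤ δ := le_min zero_le_one (by positivity)
    have hδK : δ * K ≤ m / 2 := by
      have h1 : δ * K ≤ (m / (2 * K)) * K := mul_le_mul_of_nonneg_right hδm hKpos.le
      have h2 : (m / (2 * K)) * K = m / 2 := by field_simp [hKpos.ne']
      linarith
    have hcpos : 0 < c := lt_of_lt_of_le (csharp_pos hk1 csharp hcsharp hh) hch
    clear_value L m K δ
    have hb1 : |chi k c h z₀ - chi k c₀ h₀ z₀| ≤ δ * (z₀ * (1 + k * (h₀ + 1 + c₀))) :=
      chi_param_diff_le hk0.le hz₀pos hcpos.le hh hc₀pos.le hh₀ hδ1 hcd hhd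
    have hneg : chi k c h z₀ < 0 := by
      have h1 := (abs_le.mp hb1).2
      have h2 : δ * (z₀ * (1 + k * (h₀ + 1 + c₀))) ≤ δ * K := by
        apply mul_le_mul_of_nonneg_left _ hδ0
        linarith
      have : chi k c h z₀ ≤ chi k c₀ h₀ z₀ + m / 2 := by linarith
      simp only [hm] at this ⊢
      linarith
    obtain ⟨hlpos', hlroot', hlmax'⟩ := hlam1 c h hh hch
    have := lam_gt_of_chi_neg hk0 hcpos hh hlmax' hneg
    linarith [hz₀mem.1]

include hk1 hcsharp hmu1 in
lemma mu_cont {c₀ h₀ ε : ℝ} (hh₀ : 0 ≤ h₀) (hc₀pos : 0 < c₀) (hε : 0 < ε) (hε1 : ε ≤ 1) :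
    ∃ δ > 0, ∀ c h, 0 ≤ h → 0 < c → |c - c₀| ≤ δ → |h - h₀| ≤ δ →
      |mu1 c h - mu1 c₀ h₀| < ε := by
  obtain ⟨hMpos, hMroot, hMuniq⟩ := hmu1 c₀ h₀ hh₀ hc₀pos
  have hk0 : 0 < k := by linarith
  set M := mu1 c₀ h₀ with hM
  have hM1 : 1 < M := mu_gt_one hc₀pos hMpos hMroot
  have hMε : 0 ≤ M - ε := by linarith
  have hm₁ : chiK c₀ h₀ (M - ε) < 0 :=
    chiK_neg_of_lt_mu hMpos hMroot hMuniq hc₀pos hh₀ hMε (by linarith)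
  have hm₂ : 0 < chiK c₀ h₀ (M + ε) :=
    chiK_pos_of_gt_mu hMpos hMroot hMuniq hc₀pos hh₀ (by linarith)
  set m := min (-(chiK c₀ h₀ (M - ε))) (chiK c₀ h₀ (M + ε)) with hmm
  have hmpos : 0 < m := lt_min (by linarith) hm₂
  set K := (M + ε) * (1 + (h₀ + 1 + c₀)) + 1 with hK
  have hKpos : 0 < K := by
    have : 0 ≤ (M + ε) * (1 + (h₀ + 1 + c₀)) := by positivity
    linarith
  refine ⟨min 1 (m / (2 * K)), by positivity, fun c h hh hc hcd hhd => ?_⟩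
  set δ := min 1 (m / (2 * K)) with hδ
  have hδ1 : δ ≤ 1 := min_le_left _ _
  have hδm : δ ≤ m / (2 * K) := min_le_right _ _
  have hδ0 : 0 ≤ δ := le_min zero_le_one (by positivity)
  have hδK : δ * K ≤ m / 2 := by
    have h1 : δ * K ≤ (m / (2 * K)) * K := mul_le_mul_of_nonneg_right hδm hKpos.le
    have h2 : (m / (2 * K)) * K = m / 2 := by field_simp [hKpos.ne']
    linarith
  clear_value M m K δ
  have hb1 : |chiK c h (M - ε) - chiK c₀ h₀ (M - ε)| ≤ δ * ((M - ε) * (1 + (h₀ + 1 + c₀))) :=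
    chiK_param_diff_le hMε hc.le hh hc₀pos.le hh₀ hδ1 hcd hhd
  have hb2 : |chiK c h (M + ε) - chiK c₀ h₀ (M + ε)| ≤ δ * ((M + ε) * (1 + (h₀ + 1 + c₀))) :=
    chiK_param_diff_le (by linarith) hc.le hh hc₀pos.le hh₀ hδ1 hcd hhd
  have hbound : δ * ((M - ε) * (1 + (h₀ + 1 + c₀))) ≤ δ * K ∧
      δ * ((M + ε) * (1 + (h₀ + 1 + c₀))) ≤ δ * K := by
    constructor <;>
    · apply mul_le_mul_of_nonneg_left _ hδ0
      nlinarith [hε]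
  have hneg : chiK c h (M - ε) < 0 := by
    have h1 := (abs_le.mp hb1).2
    have := min_le_left (-(chiK c₀ h₀ (M - ε))) (chiK c₀ h₀ (M + ε))
    linarith [hbound.1, hδK]
  have hpos : 0 < chiK c h (M + ε) := by
    have h1 := (abs_le.mp hb2).1
    have := min_le_right (-(chiK c₀ h₀ (M - ε))) (chiK c₀ h₀ (M + ε))
    linarith [hbound.2, hδK]
  have h0 : (0 : ℝ) ∈ Icc (chiK c h (M - ε)) (chiK c h (M + ε)) := ⟨hneg.le, hpos.le⟩
  obtain ⟨y, hy, hyeq0⟩ := intermediate_value_Icc (by linarith : M - ε ≤ M + ε)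
    (chiK_cont c h).continuousOn h0
  have hyeq : chiK c h y = 0 := hyeq0
  have hy1 : M - ε < y := by
    rcases eq_or_lt_of_le hy.1 with rfl | h'
    · exact absurd hyeq (by linarith)
    · exact h'
  have hy2 : y < M + ε := by
    rcases eq_or_lt_of_le hy.2 with rfl | h'
    · exact absurd hyeq (by linarith)
    · exact h'
  have hypos : 0 < y := by linarith
  have := (hmu1 c h hh hc).2.2 y hypos hyeq
  rw [← this]
  rw [abs_lt]
  constructor <;> linarith

include hk1 hcsharp hlam1 in
lemma lam_mono_c {h c₁ c₂ : ℝ} (hh : 0 ≤ h) (hc₁ : csharp h ≤ c₁) (hcc : c₁ < c₂) :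
    lam1 c₁ h < lam1 c₂ h := by
  have hk0 : 0 < k := by linarith
  have hc₁pos : 0 < c₁ := lt_of_lt_of_le (csharp_pos hk1 csharp hcsharp hh) hc₁
  obtain ⟨hp₁, hr₁, hm₁⟩ := hlam1 c₁ h hh hc₁
  obtain ⟨hp₂, hr₂, hm₂⟩ := hlam1 c₂ h hh (le_trans hc₁ hcc.le)
  have hneg : chi k c₂ h (lam1 c₁ h) < 0 := by
    have := chi_anti_c (h := h) hk0 hc₁pos hcc hh hp₁
    linarith [hr₁]
  exact lam_gt_of_chi_neg hk0 (lt_trans hc₁pos hcc) hh hm₂ hneg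

include hk1 hcsharp hcsharp_anti hlam1 in
lemma lam_mono_h {c h₁ h₂ : ℝ} (hh₁ : 0 ≤ h₁) (hhh : h₁ < h₂) (hc : csharp h₁ ≤ c) :
    lam1 c h₁ < lam1 c h₂ := by
  have hk0 : 0 < k := by linarith
  have hcpos : 0 < c := lt_of_lt_of_le (csharp_pos hk1 csharp hcsharp hh₁) hc
  have hc₂ : csharp h₂ ≤ c := le_trans (hcsharp_anti h₁ h₂ hh₁ hhh) hc
  obtain ⟨hp₁, hr₁, hm₁⟩ := hlam1 c h₁ hh₁ hc
  obtain ⟨hp₂, hr₂, hm₂⟩ := hlam1 c h₂ (by linarith) hc₂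
  have hneg : chi k c h₂ (lam1 c h₁) < 0 := by
    have := chi_anti_h (k := k) hk0 hcpos hh₁ hhh hp₁
    linarith [hr₁]
  exact lam_gt_of_chi_neg hk0 hcpos (by linarith) hm₂ hneg

include hmu1 in
lemma mu_anti_h {c h₁ h₂ : ℝ} (hh₁ : 0 ≤ h₁) (hhh : h₁ < h₂) (hc : 0 < c) :
    mu1 c h₂ < mu1 c h₁ := by
  obtain ⟨hp₁, hr₁, hu₁⟩ := hmu1 c h₁ hh₁ hc
  obtain ⟨hp₂, hr₂, hu₂⟩ := hmu1 c h₂ (by linarith) hc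
  have hpos : 0 < chiK c h₂ (mu1 c h₁) := by
    have := chiK_mono_h (z := mu1 c h₁) hc hh₁ hhh hp₁
    linarith [hr₁]
  rcases lt_trichotomy (mu1 c h₂) (mu1 c h₁) with hlt | heq | hgt
  · exact hlt
  · rw [heq] at hr₂; linarith [hr₁, hr₂]
  · exfalso
    have := chiK_neg_of_lt_mu hp₂ hr₂ hu₂ hc (by linarith) hp₁.le hgt
    linarith

include hk1 hcsharp hcsharp_anti hlam1 hmu1 in
lemma ratio_mono_h {c h₁ h₂ : ℝ} (hh₁ : 0 ≤ h₁) (hhh : h₁ < h₂) (hc : csharp h₁ ≤ c) :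
    lam1 c h₁ / mu1 c h₁ < lam1 c h₂ / mu1 c h₂ := by
  have hcpos : 0 < c := lt_of_lt_of_le (csharp_pos hk1 csharp hcsharp hh₁) hc
  obtain ⟨hp₁, _, _⟩ := hlam1 c h₁ hh₁ hc
  obtain ⟨hq₁, _, _⟩ := hmu1 c h₁ hh₁ hcpos
  obtain ⟨hq₂, _, _⟩ := hmu1 c h₂ (by linarith) hcpos
  have h₁lt := lam_mono_h hk1 csharp hcsharp hcsharp_anti lam1 hlam1 hh₁ hhh hc
  have h₂lt := mu_anti_h mu1 hmu1 hh₁ hhh hcpos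
  rw [div_lt_div_iff₀ hq₁ hq₂]
  nlinarith

include hk1 hcsharp hlam1 hmu1 in
lemma local_right {h s : ℝ} (hh : 0 ≤ h) (hs : csharp h ≤ s) :
    ∃ δ > 0, ∀ c', s < c' → c' ≤ s + δ →
      lam1 s h / mu1 s h < lam1 c' h / mu1 c' h := by
  have hk0 : 0 < k := by linarith
  have hspos : 0 < s := lt_of_lt_of_le (csharp_pos hk1 csharp hcsharp hh) hs
  obtain ⟨hLpos, hLroot, hLmax⟩ := hlam1 s h hh hs
  obtain ⟨hMpos, hMroot, hMuniq⟩ := hmu1 s h hh hspos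
  set L := lam1 s h with hL
  set M := mu1 s h with hM
  have hLM : L < M := lam_lt_mu hk0 hspos hh hLpos hLroot hMpos hMroot hMuniq
  have hMs : s < M := mu_gt_c hspos hMpos hMroot
  have hS := slope_nonneg hk0 hspos hh hLpos hLroot hLmax
  have hF0 : 0 < Fcmp k h L M s L M s := Fdiag_pos hk0 hh hspos hLpos hLM hMs hS
  obtain ⟨ε, hε, hbox⟩ := pos_box (Fcmp_cont1 k h L M s) hF0
  obtain ⟨δ₁, hδ₁, hlamu⟩ := lam_upper_cont hk1 csharp hcsharp lam1 hlam1 hh hs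
    (show (0:ℝ) < ε / 2 by linarith)
  obtain ⟨δ₂, hδ₂, hmucl⟩ := mu_cont hk1 csharp hcsharp mu1 hmu1 hh hspos
    (show (0:ℝ) < min (ε / 2) 1 by positivity) (min_le_right _ _)
  refine ⟨min (min δ₁ δ₂) (ε / 2), by positivity, fun c' hc1 hc2 => ?_⟩
  have habs : |c' - s| ≤ min (min δ₁ δ₂) (ε / 2) := by
    rw [abs_of_nonneg (by linarith)]
    linarith
  have habs₁ : |c' - s| ≤ δ₁ :=
    le_trans habs (le_trans (min_le_left _ _) (min_le_left _ _))
  have habs₂ : |c' - s| ≤ δ₂ :=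
    le_trans habs (le_trans (min_le_left _ _) (min_le_right _ _))
  have habsε : |c' - s| < ε := lt_of_le_of_lt (le_trans habs (min_le_right _ _)) (by linarith)
  have hdom : csharp h ≤ c' := le_trans hs hc1.le
  have hzero : |h - h| ≤ δ₁ := by simp; linarith
  have hzero₂ : |h - h| ≤ δ₂ := by simp; linarith
  have hLu := hlamu c' h hh hdom habs₁ hzero
  have hLl := lam_mono_c hk1 csharp hcsharp lam1 hlam1 hh hs hc1
  have hMc := hmucl c' h hh (by linarith) habs₂ hzero₂
  obtain ⟨hL'pos, hL'root, hL'max⟩ := hlam1 c' h hh hdom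
  obtain ⟨hM'pos, hM'root, hM'uniq⟩ := hmu1 c' h hh (by linarith)
  have hFb : 0 < Fcmp k h L M s (lam1 c' h) (mu1 c' h) c' := by
    apply hbox
    · rw [abs_lt]
      refine ⟨by linarith [hLu, hL.le, hL.ge], by linarith [hLu, hL.le, hL.ge]⟩
    · have hMc' := abs_lt.mp hMc
      rw [abs_lt]
      refine ⟨by linarith [hMc'.1, hM.le, hM.ge, min_le_left (ε/2) 1],
        by linarith [hMc'.2, hM.le, hM.ge, min_le_left (ε/2) 1]⟩
    · exact habsε
  have hkey := key_two_point hk0 hh hspos hc1 hLroot hL'root hMroot hM'root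
    hLpos hLl hMpos hM'pos hFb
  rw [div_lt_div_iff₀ hMpos hM'pos]
  linarith [hkey]

include hk1 hcsharp hlam1 hmu1 in
lemma local_left {h s : ℝ} (hh : 0 ≤ h) (hs : csharp h < s) :
    ∃ δ > 0, ∀ c'', csharp h ≤ c'' → s - δ ≤ c'' → c'' < s →
      lam1 c'' h / mu1 c'' h < lam1 s h / mu1 s h := by
  have hk0 : 0 < k := by linarith
  have hspos : 0 < s := lt_trans (csharp_pos hk1 csharp hcsharp hh) hs
  obtain ⟨hLpos, hLroot, hLmax⟩ := hlam1 s h hh hs.le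
  obtain ⟨hMpos, hMroot, hMuniq⟩ := hmu1 s h hh hspos
  set L := lam1 s h with hL
  set M := mu1 s h with hM
  have hLM : L < M := lam_lt_mu hk0 hspos hh hLpos hLroot hMpos hMroot hMuniq
  have hMs : s < M := mu_gt_c hspos hMpos hMroot
  have hS := slope_nonneg hk0 hspos hh hLpos hLroot hLmax
  have hF0 : 0 < Fcmp k h L M s L M s := Fdiag_pos hk0 hh hspos hLpos hLM hMs hS
  obtain ⟨ε, hε, hbox⟩ := pos_box (f := fun a b d => Fcmp k h a b d L M s)
    (Fcmp_cont2 k h L M s) hF0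
  obtain ⟨δ₁, hδ₁, hlaml⟩ := lam_lower_cont hk1 csharp hcsharp lam1 hlam1 hh hs
    (show (0:ℝ) < min (ε / 2) L by positivity) (min_le_right _ _)
  obtain ⟨δ₂, hδ₂, hmucl⟩ := mu_cont hk1 csharp hcsharp mu1 hmu1 hh hspos
    (show (0:ℝ) < min (ε / 2) 1 by positivity) (min_le_right _ _)
  refine ⟨min (min δ₁ δ₂) (ε / 2), by positivity, fun c'' hdom hc1 hc2 => ?_⟩
  have habs : |c'' - s| ≤ min (min δ₁ δ₂) (ε / 2) := by
    rw [abs_of_nonpos (by linarith)]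
    linarith
  have habs₁ : |c'' - s| ≤ δ₁ :=
    le_trans habs (le_trans (min_le_left _ _) (min_le_left _ _))
  have habs₂ : |c'' - s| ≤ δ₂ :=
    le_trans habs (le_trans (min_le_left _ _) (min_le_right _ _))
  have habsε : |c'' - s| < ε := lt_of_le_of_lt (le_trans habs (min_le_right _ _)) (by linarith)
  have hc''pos : 0 < c'' := lt_of_lt_of_le (csharp_pos hk1 csharp hcsharp hh) hdom
  have hzero : |h - h| ≤ δ₁ := by simp; linarith
  have hzero₂ : |h - h| ≤ δ₂ := by simp; linarith
  have hLl := hlaml c'' h hh hdom habs₁ hzero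
  have hLu := lam_mono_c hk1 csharp hcsharp lam1 hlam1 hh hdom hc2
  have hMc := hmucl c'' h hh hc''pos habs₂ hzero₂
  obtain ⟨hL''pos, hL''root, hL''max⟩ := hlam1 c'' h hh hdom
  obtain ⟨hM''pos, hM''root, hM''uniq⟩ := hmu1 c'' h hh hc''pos
  have hFb : 0 < Fcmp k h (lam1 c'' h) (mu1 c'' h) c'' L M s := by
    apply hbox
    · rw [abs_lt]
      refine ⟨by linarith [hLl, hL.le, hL.ge, min_le_left (ε/2) L],
        by linarith [hLu, hL.le, hL.ge]⟩
    · have hMc' := abs_lt.mp hMc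
      rw [abs_lt]
      refine ⟨by linarith [hMc'.1, hM.le, hM.ge, min_le_left (ε/2) 1],
        by linarith [hMc'.2, hM.le, hM.ge, min_le_left (ε/2) 1]⟩
    · exact habsε
  have hkey := key_two_point hk0 hh hc''pos hc2 hL''root hLroot hM''root hMroot
    hL''pos hLu hM''pos hMpos hFb
  rw [div_lt_div_iff₀ hM''pos hMpos]
  linarith [hkey]

include hk1 hcsharp hcsharp_anti hlam1 hmu1 in
lemma ratio_strictMonoOn {h : ℝ} (hh : 0 ≤ h) :
    StrictMonoOn (fun c => lam1 c h / mu1 c h) (Ici (csharp h)) := by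
  intro a ha b hb hab
  simp only [mem_Ici] at ha hb
  show lam1 a h / mu1 a h < lam1 b h / mu1 b h
  set P : ℝ → Prop :=
    fun x => ∀ y, a < y → y ≤ x → lam1 a h / mu1 a h < lam1 y h / mu1 y h with hPdef
  set S : Set ℝ := {x | x ∈ Icc a b ∧ P x} with hSdef
  have hSa : a ∈ S :=
    ⟨⟨le_refl a, hab.le⟩, fun y hy hy' => absurd (lt_of_lt_of_le hy hy') (lt_irrefl a)⟩
  have hSne : S.Nonempty := ⟨a, hSa⟩
  have hSbdd : BddAbove S := ⟨b, fun x hx => hx.1.2⟩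
  obtain ⟨s, hsdef⟩ : ∃ s, s = sSup S := ⟨_, rfl⟩
  have has : a ≤ s := by
    have h2 := le_csSup hSbdd hSa
    rw [← hsdef] at h2
    exact h2
  have hsb : s ≤ b := by
    have h2 := csSup_le hSne fun x hx => hx.1.2
    rw [← hsdef] at h2
    exact h2
  have hsdom : csharp h ≤ s := le_trans ha has
  have hPs : P s := by
    intro y hay hys
    rcases eq_or_lt_of_le hys with heq | hlt
    · rw [heq]
      have hasy : a < s := by rw [← heq]; exact hay
      obtain ⟨δL, hδL, hleft⟩ := local_left hk1 csharp hcsharp lam1 mu1 hlam1 hmu1 hh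
        (lt_of_le_of_lt ha hasy)
      have hδ' : 0 < min δL (s - a) := lt_min hδL (by linarith)
      obtain ⟨x, hxS, hxgt⟩ : ∃ x ∈ S, s - min δL (s - a) < x := by
        by_contra hcon
        push_neg at hcon
        have h2 : sSup S ≤ s - min δL (s - a) := csSup_le hSne (fun w hw => hcon w hw)
        rw [← hsdef] at h2
        linarith
      have hxs : x ≤ s := by
        have h2 := le_csSup hSbdd hxS
        rw [← hsdef] at h2
        exact h2
      rcases eq_or_lt_of_le hxs with heqx | hltx
      · have h2 := hxS.2 x (hasy.trans_eq heqx.symm) le_rfl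
        rw [heqx] at h2
        exact h2
      · have hax : a < x := by
          have h1 : min δL (s - a) ≤ s - a := min_le_right _ _
          linarith
        have hRx := hxS.2 x hax le_rfl
        have hRxs := hleft x (le_trans ha hax.le)
          (by linarith [min_le_left δL (s - a)]) hltx
        exact lt_trans hRx hRxs
    · obtain ⟨x, hxS, hyx⟩ : ∃ x ∈ S, y < x := by
        by_contra hcon
        push_neg at hcon
        have h2 : sSup S ≤ y := csSup_le hSne (fun w hw => hcon w hw)
        rw [← hsdef] at h2
        linarith
      exact hxS.2 y hay hyx.le
  have hsEq : s = b := by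
    by_contra hne
    have hslt : s < b := lt_of_le_of_ne hsb hne
    obtain ⟨δR, hδR, hright⟩ := local_right hk1 csharp hcsharp lam1 mu1 hlam1 hmu1 hh hsdom
    have hx's : s < min b (s + δR) := lt_min hslt (by linarith)
    have hx'S : min b (s + δR) ∈ S := by
      refine ⟨⟨by linarith, min_le_left _ _⟩, ?_⟩
      intro y hay hyx'
      rcases le_or_gt y s with hyle | hygt
      · exact hPs y hay hyle
      · have hRy := hright y hygt (le_trans hyx' (min_le_right _ _))
        rcases eq_or_lt_of_le has with heqa | hlta
        · rw [← heqa] at hRy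
          exact hRy
        · exact lt_trans (hPs s hlta le_rfl) hRy
    have := le_csSup hSbdd hx'S
    rw [← hsdef] at this
    linarith
  exact hPs b hab (le_of_eq hsEq.symm)
include hk1 hcsharp hcsharp_anti in
lemma csharp_anti_le {h₁ h₂ : ℝ} (hh₁ : 0 ≤ h₁) (hle : h₁ ≤ h₂) :
    csharp h₂ ≤ csharp h₁ := by
  rcases eq_or_lt_of_le hle with rfl | hlt
  · exact le_refl _
  · exact hcsharp_anti h₁ h₂ hh₁ hlt

include hk1 hcsharp hcsharp_anti in
lemma csharp_cont_right {h₀ : ℝ} (hh₀ : 0 ≤ h₀) {ε : ℝ} (hε : 0 < ε) :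
    ∃ δ > 0, ∀ h', h₀ < h' → h' ≤ h₀ + δ → csharp h₀ - ε < csharp h' := by
  by_contra hcon
  push_neg at hcon
  have hseq : ∀ n : ℕ, ∃ h', h₀ < h' ∧ h' ≤ h₀ + 1 / (n + 1) ∧
      csharp h' ≤ csharp h₀ - ε := by
    intro n
    obtain ⟨h', h1, h2, h3⟩ := hcon (1 / (n + 1)) (by positivity)
    exact ⟨h', h1, h2, h3⟩
  choose f hf1 hf2 hf3 using hseq
  have hfpos : ∀ n, 0 ≤ f n := fun n => le_of_lt (lt_of_le_of_lt hh₀ (hf1 n))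
  have hftend : Tendsto f atTop (nhds h₀) := by
    have hup : Tendsto (fun n : ℕ => h₀ + 1 / ((n : ℝ) + 1)) atTop (nhds h₀) := by
      have := tendsto_one_div_add_atTop_nhds_zero_nat (𝕜 := ℝ)
      have h2 := tendsto_const_nhds (x := h₀) (f := atTop (α := ℕ)) |>.add this
      simpa using h2
    exact tendsto_of_tendsto_of_tendsto_of_le_of_le
      (tendsto_const_nhds (x := h₀)) hup (fun n => (hf1 n).le) (fun n => hf2 n)
  set cs : ℕ → ℝ := fun n => csharp (f n) with hcs
  have hbound : ∀ n, csharp (h₀ + 1) ≤ cs n ∧ cs n ≤ csharp h₀ := by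
    intro n
    constructor
    · refine csharp_anti_le hk1 csharp hcsharp hcsharp_anti (hfpos n) ?_
      have hd : (1:ℝ) / (n + 1) ≤ 1 :=
        div_le_one_of_le₀ (by linarith [Nat.cast_nonneg (α := ℝ) n]) (by positivity)
      linarith [hf2 n]
    · exact (hcsharp_anti h₀ (f n) hh₀ (hf1 n))
  have hApos : 0 < csharp (h₀ + 1) := ((hcsharp (h₀ + 1) (by linarith)).1).1
  have hcmem : ∀ n, cs n ∈ Icc (csharp (h₀ + 1)) (csharp h₀) := fun n => hbound n
  obtain ⟨cbar, hcbarmem, φ, hφ, hctend⟩ :=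
    (isCompact_Icc (a := csharp (h₀ + 1)) (b := csharp h₀)).tendsto_subseq hcmem
  have hlim : IsCsharp k h₀ cbar :=
    isCsharp_limit hk1 (cs := fun n => cs (φ n)) (hs := fun n => f (φ n)) hh₀
      (fun n => (hcsharp (f (φ n)) (hfpos (φ n))).1) (fun n => hfpos (φ n))
      hctend (hftend.comp hφ.tendsto_atTop) hApos (fun n => hbound (φ n))
  have hEq := (hcsharp h₀ hh₀).2 cbar hlim
  have hle : cbar ≤ csharp h₀ - ε :=
    le_of_tendsto hctend (Eventually.of_forall fun n => hf3 (φ n))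
  rw [hEq] at hle
  linarith

include hk1 hcsharp hcsharp_anti in
lemma csharp_cont_left {h₀ : ℝ} (hh₀ : 0 < h₀) {ε : ℝ} (hε : 0 < ε) :
    ∃ δ > 0, ∀ h', 0 ≤ h' → h₀ - δ ≤ h' → h' < h₀ → csharp h' < csharp h₀ + ε := by
  by_contra hcon
  push_neg at hcon
  have hseq : ∀ n : ℕ, ∃ h', 0 ≤ h' ∧ h₀ - min (1 / ((n : ℝ) + 1)) (h₀ / 2) ≤ h' ∧ h' < h₀ ∧
      csharp h₀ + ε ≤ csharp h' := by
    intro n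
    obtain ⟨h', h1, h2, h3, h4⟩ := hcon (min (1 / ((n : ℝ) + 1)) (h₀ / 2))
      (lt_min (by positivity) (by linarith))
    exact ⟨h', h1, h2, h3, h4⟩
  choose f hf0 hf1 hf2 hf3 using hseq
  have hfhalf : ∀ n, h₀ / 2 ≤ f n := by
    intro n
    have := min_le_right (1 / ((n : ℝ) + 1)) (h₀ / 2)
    linarith [hf1 n]
  have hftend : Tendsto f atTop (nhds h₀) := by
    have hlow : Tendsto (fun n : ℕ => h₀ - 1 / ((n : ℝ) + 1)) atTop (nhds h₀) := by
      have := tendsto_one_div_add_atTop_nhds_zero_nat (𝕜 := ℝ)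
      have h2 := tendsto_const_nhds (x := h₀) (f := atTop (α := ℕ)) |>.sub this
      simpa using h2
    refine tendsto_of_tendsto_of_tendsto_of_le_of_le hlow
      (tendsto_const_nhds (x := h₀)) (fun n => ?_) (fun n => (hf2 n).le)
    have := min_le_left (1 / ((n : ℝ) + 1)) (h₀ / 2)
    linarith [hf1 n]
  set cs : ℕ → ℝ := fun n => csharp (f n) with hcs
  have hbound : ∀ n, csharp h₀ ≤ cs n ∧ cs n ≤ csharp (h₀ / 2) := by
    intro n
    constructor
    · exact hcsharp_anti (f n) h₀ (hf0 n) (hf2 n)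
    · exact csharp_anti_le hk1 csharp hcsharp hcsharp_anti (by linarith) (hfhalf n)
  have hApos : 0 < csharp h₀ := ((hcsharp h₀ hh₀.le).1).1
  have hcmem : ∀ n, cs n ∈ Icc (csharp h₀) (csharp (h₀ / 2)) := fun n => hbound n
  obtain ⟨cbar, hcbarmem, φ, hφ, hctend⟩ :=
    (isCompact_Icc (a := csharp h₀) (b := csharp (h₀ / 2))).tendsto_subseq hcmem
  have hlim : IsCsharp k h₀ cbar :=
    isCsharp_limit hk1 (cs := fun n => cs (φ n)) (hs := fun n => f (φ n)) hh₀.le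
      (fun n => (hcsharp (f (φ n)) (hf0 (φ n))).1) (fun n => hf0 (φ n))
      hctend (hftend.comp hφ.tendsto_atTop) hApos (fun n => hbound (φ n))
  have hEq := (hcsharp h₀ hh₀.le).2 cbar hlim
  have hge : csharp h₀ + ε ≤ cbar :=
    ge_of_tendsto hctend (Eventually.of_forall fun n => hf3 (φ n))
  rw [hEq] at hge
  linarith

include hk1 hcsharp hcsharp_anti hlam1 hmu1 in
lemma ratio_monotoneOn {h c₁ c₂ : ℝ} (hh : 0 ≤ h) (h₁ : csharp h ≤ c₁)
    (h₂ : csharp h ≤ c₂) (hcc : c₁ ≤ c₂) :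
    lam1 c₁ h / mu1 c₁ h ≤ lam1 c₂ h / mu1 c₂ h := by
  rcases eq_or_lt_of_le hcc with rfl | hlt
  · exact le_refl _
  · exact (ratio_strictMonoOn hk1 csharp hcsharp hcsharp_anti lam1 mu1 hlam1 hmu1 hh
      h₁ h₂ hlt).le

include hk1 hcsharp hcsharp_anti hlam1 hmu1 in
lemma cstar_strictAntiOn
    (hcst : ∀ h ∈ Icc (0 : ℝ) hp,
      csharp h ≤ cstar h ∧ lam1 (cstar h) h / mu1 (cstar h) h = (3 - k) / 4) :
    StrictAntiOn cstar (Icc 0 hp) := by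
  intro h₁ hm₁ h₂ hm₂ h12
  by_contra hcon
  push_neg at hcon
  obtain ⟨hd₁, hr₁⟩ := hcst h₁ hm₁
  obtain ⟨hd₂, hr₂⟩ := hcst h₂ hm₂
  have hdom : csharp h₁ ≤ cstar h₂ := le_trans hd₁ hcon
  have step1 : lam1 (cstar h₂) h₁ / mu1 (cstar h₂) h₁ <
      lam1 (cstar h₂) h₂ / mu1 (cstar h₂) h₂ :=
    ratio_mono_h hk1 csharp hcsharp hcsharp_anti lam1 mu1 hlam1 hmu1 hm₁.1 h12 hdom
  have step2 : lam1 (cstar h₁) h₁ / mu1 (cstar h₁) h₁ ≤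
      lam1 (cstar h₂) h₁ / mu1 (cstar h₂) h₁ :=
    ratio_monotoneOn hk1 csharp hcsharp hcsharp_anti lam1 mu1 hlam1 hmu1 hm₁.1
      hd₁ hdom hcon
  rw [hr₁] at step2
  rw [hr₂] at step1
  linarith

include hk1 hk3 hcsharp hcsharp_anti hlam1 hmu1 in
lemma cstar_right
    (hcst : ∀ h ∈ Icc (0 : ℝ) hp,
      csharp h ≤ cstar h ∧ lam1 (cstar h) h / mu1 (cstar h) h = (3 - k) / 4)
    {h₀ : ℝ} (hm₀ : h₀ ∈ Icc (0 : ℝ) hp) {ε : ℝ} (hε : 0 < ε) :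
    ∃ δ > 0, ∀ h ∈ Icc (0 : ℝ) hp, h₀ < h → h ≤ h₀ + δ → cstar h₀ - ε < cstar h := by
  by_contra hcon
  push_neg at hcon
  obtain ⟨hd₀, hr₀⟩ := hcst h₀ hm₀
  have hh₀ : 0 ≤ h₀ := hm₀.1
  set r : ℝ := (3 - k) / 4 with hrdef
  have hrpos : 0 < r := by rw [hrdef]; linarith
  -- Step A : csharp h₀ ≤ cstar h₀ - ε
  have stepA : csharp h₀ ≤ cstar h₀ - ε := by
    by_contra hA
    push_neg at hA
    obtain ⟨δ', hδ', hcr⟩ := csharp_cont_right hk1 csharp hcsharp hcsharp_anti hh₀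
      (show 0 < csharp h₀ - (cstar h₀ - ε) by linarith)
    obtain ⟨h, hmem, hlt, hle, hbad⟩ := hcon δ' hδ'
    have h1 := hcr h hlt hle
    have h2 := (hcst h hmem).1
    linarith
  set c₁ : ℝ := cstar h₀ - ε with hc₁def
  have hc₁pos : 0 < c₁ := lt_of_lt_of_le (csharp_pos hk1 csharp hcsharp hh₀) stepA
  -- Step B : margin
  have stepB : lam1 c₁ h₀ / mu1 c₁ h₀ < r := by
    have := ratio_strictMonoOn hk1 csharp hcsharp hcsharp_anti lam1 mu1 hlam1 hmu1 hh₀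
      (show c₁ ∈ Ici (csharp h₀) from stepA)
      (show cstar h₀ ∈ Ici (csharp h₀) from hd₀) (by linarith)
    have this2 : lam1 c₁ h₀ / mu1 c₁ h₀ <
        lam1 (cstar h₀) h₀ / mu1 (cstar h₀) h₀ := this
    rw [hr₀] at this2
    exact this2
  obtain ⟨hLpos, _, _⟩ := hlam1 c₁ h₀ hh₀ stepA
  obtain ⟨hMpos, _, _⟩ := hmu1 c₁ h₀ hh₀ hc₁pos
  set L := lam1 c₁ h₀ with hLdef
  set M := mu1 c₁ h₀ with hMdef
  have hrM : 0 < r * M - L := by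
    have := (div_lt_iff₀ hMpos).mp stepB
    linarith
  set ε₁ : ℝ := min (min ((r * M - L) / (2 * (1 + r))) (M / 2)) 1 with hε₁def
  have hε₁pos : 0 < ε₁ := by
    apply lt_min (lt_min _ _) one_pos
    · positivity
    · positivity
  have hε₁1 : ε₁ ≤ 1 := min_le_right _ _
  have hε₁M : ε₁ ≤ M / 2 := le_trans (min_le_left _ _) (min_le_right _ _)
  have hε₁r : ε₁ * (1 + r) ≤ (r * M - L) / 2 := by
    have h1 : ε₁ ≤ (r * M - L) / (2 * (1 + r)) :=
      le_trans (min_le_left _ _) (min_le_left _ _)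
    have h2 : 0 < 1 + r := by linarith
    calc ε₁ * (1 + r) ≤ ((r * M - L) / (2 * (1 + r))) * (1 + r) :=
          mul_le_mul_of_nonneg_right h1 h2.le
      _ = (r * M - L) / 2 := by field_simp
  obtain ⟨δ₁, hδ₁, hlamu⟩ := lam_upper_cont hk1 csharp hcsharp lam1 hlam1 hh₀ stepA hε₁pos
  obtain ⟨δ₂, hδ₂, hmucl⟩ := mu_cont hk1 csharp hcsharp mu1 hmu1 hh₀ hc₁pos hε₁pos hε₁1
  -- final contradiction
  obtain ⟨h, hmem, hlt, hle, hbad⟩ := hcon (min δ₁ δ₂) (lt_min hδ₁ hδ₂)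
  have hh : 0 ≤ h := hmem.1
  have hcsh : csharp h ≤ c₁ := by
    have := hcsharp_anti h₀ h hh₀ hlt
    linarith [stepA]
  have habsc : |c₁ - c₁| ≤ δ₁ := by simp; linarith
  have habsc₂ : |c₁ - c₁| ≤ δ₂ := by simp; linarith
  have habsh₁ : |h - h₀| ≤ δ₁ := by
    rw [abs_of_nonneg (by linarith)]
    linarith [min_le_left δ₁ δ₂]
  have habsh₂ : |h - h₀| ≤ δ₂ := by
    rw [abs_of_nonneg (by linarith)]
    linarith [min_le_right δ₁ δ₂]
  have hLu := hlamu c₁ h hh hcsh habsc habsh₁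
  have hMc := abs_lt.mp (hmucl c₁ h hh hc₁pos habsc₂ habsh₂)
  obtain ⟨hL'pos, _, _⟩ := hlam1 c₁ h hh hcsh
  obtain ⟨hM'pos, _, _⟩ := hmu1 c₁ h hh hc₁pos
  have hratio : lam1 c₁ h / mu1 c₁ h < r := by
    rw [div_lt_iff₀ hM'pos]
    have h1 : r * (M - ε₁) ≤ r * mu1 c₁ h :=
      mul_le_mul_of_nonneg_left (by linarith [hMc.1]) hrpos.le
    have h2 : L + ε₁ ≤ r * (M - ε₁) := by nlinarith [hε₁r]
    linarith
  have hmono : lam1 (cstar h) h / mu1 (cstar h) h ≤ lam1 c₁ h / mu1 c₁ h :=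
    ratio_monotoneOn hk1 csharp hcsharp hcsharp_anti lam1 mu1 hlam1 hmu1 hh
      (hcst h hmem).1 hcsh hbad
  rw [(hcst h hmem).2] at hmono
  linarith

include hk1 hk3 hcsharp hcsharp_anti hlam1 hmu1 in
lemma cstar_left
    (hcst : ∀ h ∈ Icc (0 : ℝ) hp,
      csharp h ≤ cstar h ∧ lam1 (cstar h) h / mu1 (cstar h) h = (3 - k) / 4)
    {h₀ : ℝ} (hm₀ : h₀ ∈ Icc (0 : ℝ) hp) (hh₀pos : 0 < h₀) {ε : ℝ} (hε : 0 < ε) :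
    ∃ δ > 0, ∀ h ∈ Icc (0 : ℝ) hp, h₀ - δ ≤ h → h < h₀ → cstar h < cstar h₀ + ε := by
  by_contra hcon
  push_neg at hcon
  obtain ⟨hd₀, hr₀⟩ := hcst h₀ hm₀
  have hh₀ : 0 ≤ h₀ := hm₀.1
  set r : ℝ := (3 - k) / 4 with hrdef
  have hrpos : 0 < r := by rw [hrdef]; linarith
  set c₂ : ℝ := cstar h₀ + ε with hc₂def
  have hdom₀ : csharp h₀ < c₂ := by
    have := hd₀
    simp only [hc₂def]
    linarith
  have hc₂pos : 0 < c₂ := lt_trans (csharp_pos hk1 csharp hcsharp hh₀) hdom₀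
  obtain ⟨δL, hδL, hcl⟩ := csharp_cont_left hk1 csharp hcsharp hcsharp_anti hh₀pos hε
  have stepB : r < lam1 c₂ h₀ / mu1 c₂ h₀ := by
    have := ratio_strictMonoOn hk1 csharp hcsharp hcsharp_anti lam1 mu1 hlam1 hmu1 hh₀
      (show cstar h₀ ∈ Ici (csharp h₀) from hd₀)
      (show c₂ ∈ Ici (csharp h₀) from hdom₀.le) (by simp only [hc₂def]; linarith)
    have this2 : lam1 (cstar h₀) h₀ / mu1 (cstar h₀) h₀ <
        lam1 c₂ h₀ / mu1 c₂ h₀ := this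
    rw [hr₀] at this2
    exact this2
  obtain ⟨hLpos, _, _⟩ := hlam1 c₂ h₀ hh₀ hdom₀.le
  obtain ⟨hMpos, _, _⟩ := hmu1 c₂ h₀ hh₀ hc₂pos
  set L := lam1 c₂ h₀ with hLdef
  set M := mu1 c₂ h₀ with hMdef
  have hrM : 0 < L - r * M := by
    have := (lt_div_iff₀ hMpos).mp stepB
    linarith
  set ε₁ : ℝ := min (min ((L - r * M) / (2 * (1 + r))) (L / 2)) 1 with hε₁def
  have hε₁pos : 0 < ε₁ := by
    apply lt_min (lt_min _ _) one_pos
    · positivity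
    · positivity
  have hε₁1 : ε₁ ≤ 1 := min_le_right _ _
  have hε₁L : ε₁ ≤ L / 2 := le_trans (min_le_left _ _) (min_le_right _ _)
  have hε₁r : ε₁ * (1 + r) ≤ (L - r * M) / 2 := by
    have h1 : ε₁ ≤ (L - r * M) / (2 * (1 + r)) :=
      le_trans (min_le_left _ _) (min_le_left _ _)
    have h2 : 0 < 1 + r := by linarith
    calc ε₁ * (1 + r) ≤ ((L - r * M) / (2 * (1 + r))) * (1 + r) :=
          mul_le_mul_of_nonneg_right h1 h2.le
      _ = (L - r * M) / 2 := by field_simp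
  obtain ⟨δ₁, hδ₁, hlaml⟩ := lam_lower_cont hk1 csharp hcsharp lam1 hlam1 hh₀ hdom₀
    hε₁pos (by linarith)
  obtain ⟨δ₂, hδ₂, hmucl⟩ := mu_cont hk1 csharp hcsharp mu1 hmu1 hh₀ hc₂pos hε₁pos hε₁1
  obtain ⟨h, hmem, hge, hlt, hbad⟩ := hcon (min (min δ₁ δ₂) δL)
    (lt_min (lt_min hδ₁ hδ₂) hδL)
  have hh : 0 ≤ h := hmem.1
  have hcsh : csharp h ≤ c₂ := by
    have h1 := hcl h hh (by linarith [min_le_right (min δ₁ δ₂) δL]) hlt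
    simp only [hc₂def]
    linarith [hd₀]
  have habsc : |c₂ - c₂| ≤ δ₁ := by simp; linarith
  have habsc₂ : |c₂ - c₂| ≤ δ₂ := by simp; linarith
  have habsh₁ : |h - h₀| ≤ δ₁ := by
    rw [abs_of_nonpos (by linarith)]
    have := min_le_left (min δ₁ δ₂) δL
    have := min_le_left δ₁ δ₂
    linarith
  have habsh₂ : |h - h₀| ≤ δ₂ := by
    rw [abs_of_nonpos (by linarith)]
    have := min_le_left (min δ₁ δ₂) δL
    have := min_le_right δ₁ δ₂
    linarith
  have hLl := hlaml c₂ h hh hcsh habsc habsh₁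
  have hMc := abs_lt.mp (hmucl c₂ h hh hc₂pos habsc₂ habsh₂)
  obtain ⟨hL'pos, _, _⟩ := hlam1 c₂ h hh hcsh
  obtain ⟨hM'pos, _, _⟩ := hmu1 c₂ h hh hc₂pos
  have hratio : r < lam1 c₂ h / mu1 c₂ h := by
    rw [lt_div_iff₀ hM'pos]
    have h1 : r * mu1 c₂ h ≤ r * (M + ε₁) :=
      mul_le_mul_of_nonneg_left (by linarith [hMc.2]) hrpos.le
    have h2 : r * (M + ε₁) ≤ L - ε₁ := by nlinarith [hε₁r]
    linarith
  have hmono : lam1 c₂ h / mu1 c₂ h ≤ lam1 (cstar h) h / mu1 (cstar h) h :=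
    ratio_monotoneOn hk1 csharp hcsharp hcsharp_anti lam1 mu1 hlam1 hmu1 hh
      hcsh (hcst h hmem).1 hbad
  rw [(hcst h hmem).2] at hmono
  linarith


include hk1 hk3 hcsharp hcsharp_anti hlam1 hmu1 in
lemma cstar_cont
    (hcst : ∀ h ∈ Icc (0 : ℝ) hp,
      csharp h ≤ cstar h ∧ lam1 (cstar h) h / mu1 (cstar h) h = (3 - k) / 4) :
    ContinuousOn cstar (Icc 0 hp) := by
  intro h₀ hm₀
  rw [Metric.continuousWithinAt_iff]
  intro ε hε
  obtain ⟨δR, hδR, hR⟩ := cstar_right hk1 hk3 csharp hcsharp hcsharp_anti lam1 mu1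
    hlam1 hmu1 hcst hm₀ hε
  have hanti := cstar_strictAntiOn hk1 csharp hcsharp hcsharp_anti lam1 mu1 hlam1 hmu1 hcst
  rcases eq_or_lt_of_le hm₀.1 with heq0 | hpos
  · refine ⟨δR, hδR, fun x hx hdist => ?_⟩
    rw [Real.dist_eq] at hdist ⊢
    rcases lt_trichotomy x h₀ with hlt | heqx | hgt
    · exfalso
      rw [← heq0] at hlt
      linarith [hx.1]
    · rw [heqx]
      simpa using hε
    · have hdist' := abs_lt.mp hdist
      have h1 := hR x hx hgt (by linarith [hdist'.2])
      have h2 := hanti hm₀ hx hgt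
      rw [abs_lt]
      constructor <;> linarith
  · obtain ⟨δL, hδL, hL⟩ := cstar_left hk1 hk3 csharp hcsharp hcsharp_anti lam1 mu1
      hlam1 hmu1 hcst hm₀ hpos hε
    refine ⟨min δR δL, lt_min hδR hδL, fun x hx hdist => ?_⟩
    rw [Real.dist_eq] at hdist ⊢
    have hdist' := abs_lt.mp hdist
    rcases lt_trichotomy x h₀ with hlt | heqx | hgt
    · have h1 := hL x hx (by linarith [hdist'.1, min_le_right δR δL]) hlt
      have h2 := hanti hx hm₀ hlt
      rw [abs_lt]
      constructor <;> linarith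
    · rw [heqx]
      simpa using hε
    · have h1 := hR x hx hgt (by linarith [hdist'.2, min_le_left δR δL])
      have h2 := hanti hm₀ hx hgt
      rw [abs_lt]
      constructor <;> linarith

end main

/-- The ratio `λ₁/μ₁` is strictly increasing in the delay `h` (for fixed speed) as well
as in the velocity `c` (for fixed delay); consequently the pushed minimal speed
`c_*`, implicitly defined by `λ₁(c_*(h),h)/μ₁(c_*(h),h) = (3-k)/4`, is continuous and
strictly decreasing. -/
theorem pushed_speed_decreasing
    (k : ℝ) (hk1 : 1 < k) (hk3 : k < 3)
    (csharp : ℝ → ℝ)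
    (hcsharp : ∀ h : ℝ, 0 ≤ h →
      IsCsharp k h (csharp h) ∧ ∀ c : ℝ, IsCsharp k h c → c = csharp h)
    (hcsharp_anti : ∀ h₁ h₂ : ℝ, 0 ≤ h₁ → h₁ < h₂ → csharp h₂ ≤ csharp h₁)
    (lam1 mu1 : ℝ → ℝ → ℝ)
    (hlam1 : ∀ c h : ℝ, 0 ≤ h → csharp h ≤ c →
      0 < lam1 c h ∧ chi k c h (lam1 c h) = 0 ∧ ∀ z : ℝ, chi k c h z = 0 → z ≤ lam1 c h)
    (hmu1 : ∀ c h : ℝ, 0 ≤ h → 0 < c →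
      0 < mu1 c h ∧ chiK c h (mu1 c h) = 0 ∧
        ∀ z : ℝ, 0 < z → chiK c h z = 0 → z = mu1 c h) :
    (∀ c h₁ h₂ : ℝ, 0 ≤ h₁ → h₁ < h₂ → csharp h₁ ≤ c →
      lam1 c h₁ / mu1 c h₁ < lam1 c h₂ / mu1 c h₂) ∧
    (∀ h : ℝ, 0 ≤ h → StrictMonoOn (fun c => lam1 c h / mu1 c h) (Ici (csharp h))) ∧
    (∀ (hp : ℝ) (cstar : ℝ → ℝ), 0 < hp →
      (∀ h ∈ Icc (0 : ℝ) hp,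
        csharp h ≤ cstar h ∧ lam1 (cstar h) h / mu1 (cstar h) h = (3 - k) / 4) →
      ContinuousOn cstar (Icc 0 hp) ∧ StrictAntiOn cstar (Icc 0 hp)) := by
  refine ⟨fun c h₁ h₂ hh₁ h12 hc =>
      ratio_mono_h hk1 csharp hcsharp hcsharp_anti lam1 mu1 hlam1 hmu1 hh₁ h12 hc,
    fun h hh => ratio_strictMonoOn hk1 csharp hcsharp hcsharp_anti lam1 mu1 hlam1 hmu1 hh,
    fun hp cstar hhp hcst =>
      ⟨cstar_cont hk1 hk3 csharp hcsharp hcsharp_anti lam1 mu1 hlam1 hmu1 hcst,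
       cstar_strictAntiOn hk1 csharp hcsharp hcsharp_anti lam1 mu1 hlam1 hmu1 hcst⟩⟩
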